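/- Let V be an F-vector space, 𝓛 a series in V, and 𝓑 an 𝓛-adapted basis: for each jump j = (B,T) of 𝓛, the set {v + B : v ∈ 𝓑, v ∈ T \ B} is a basis of T/B. Then for any U < W in 𝓛, the set {v + U : v ∈ 𝓑 ∩ (W \ U)} is a basis of W/U. -/

import Mathlib

section Defs

variable {F V : Type*} [Field F] [AddCommGroup V] [Module F V]

/-- A *series* in a vector space `V`. -/
def IsSeries (𝓛 : Set (Submodule F V)) : Prop :=
  ⊥ ∈ 𝓛 ∧ ⊤ ∈ 𝓛 ∧ IsChain (· ≤ ·) 𝓛 ∧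
    ∀ 𝓕 : Set (Submodule F V), 𝓕 ⊆ 𝓛 → 𝓕.Nonempty → sInf 𝓕 ∈ 𝓛 ∧ sSup 𝓕 ∈ 𝓛

/-- `(B, T)` is a *jump* of the series `𝓛`. -/
def IsJump (𝓛 : Set (Submodule F V)) (B T : Submodule F V) : Prop :=
  B ∈ 𝓛 ∧ T ∈ 𝓛 ∧ B < T ∧ ∀ U ∈ 𝓛, B ≤ U → U ≤ T → U = B ∨ U = T

/-- Every nonzero vector lies in a jump of the series. -/
lemma exists_jump_aux (𝓛 : Set (Submodule F V)) (hser : IsSeries 𝓛) (v : V) (hv : v ≠ 0) :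
    ∃ B T, IsJump 𝓛 B T ∧ v ∈ T ∧ v ∉ B := by
  obtain ⟨hbot, htop, hchain, hclosed⟩ := hser
  set S₁ : Set (Submodule F V) := {X ∈ 𝓛 | v ∉ X} with hS₁
  set S₂ : Set (Submodule F V) := {X ∈ 𝓛 | v ∈ X} with hS₂
  have hS₁sub : S₁ ⊆ 𝓛 := fun X hX => hX.1
  have hS₂sub : S₂ ⊆ 𝓛 := fun X hX => hX.1
  have hS₁ne : S₁.Nonempty := ⟨⊥, hbot, by simpa using hv⟩
  have hS₂ne : S₂.Nonempty := ⟨⊤, htop, trivial⟩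
  have hB : sSup S₁ ∈ 𝓛 := (hclosed S₁ hS₁sub hS₁ne).2
  have hT : sInf S₂ ∈ 𝓛 := (hclosed S₂ hS₂sub hS₂ne).1
  have hvT : v ∈ sInf S₂ := Submodule.mem_sInf.mpr fun X hX => hX.2
  have hvB : v ∉ sSup S₁ := by
    intro hmem
    obtain ⟨X, hX, hvX⟩ := (Submodule.mem_sSup_of_directed hS₁ne
      ((hchain.mono hS₁sub).directedOn)).mp hmem
    exact hX.2 hvX
  have hle : sSup S₁ ≤ sInf S₂ := by
    apply sSup_le
    intro X hX
    apply le_sInf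
    intro Y hY
    rcases eq_or_ne X Y with rfl | hne
    · exact le_rfl
    · rcases hchain (hS₁sub hX) (hS₂sub hY) hne with h | h
      · exact h
      · exact absurd (h hY.2) hX.2
  refine ⟨sSup S₁, sInf S₂, ⟨hB, hT, lt_of_le_of_ne hle ?_, ?_⟩, hvT, hvB⟩
  · intro h; exact hvB (h ▸ hvT)
  · intro Y hY h1 h2
    by_cases hvY : v ∈ Y
    · exact Or.inr (le_antisymm h2 (sInf_le ⟨hY, hvY⟩))
    · exact Or.inl (le_antisymm (le_sSup ⟨hY, hvY⟩) h1)

/-- Generic facts about a vector in a jump. -/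
lemma jump_le_of_not_mem (𝓛 : Set (Submodule F V)) (hser : IsSeries 𝓛)
    {B T : Submodule F V} (hj : IsJump 𝓛 B T) {v : V} (hvT : v ∈ T) (hvB : v ∉ B)
    {X : Submodule F V} (hX : X ∈ 𝓛) (hvX : v ∉ X) : X ≤ B := by
  obtain ⟨hBmem, hTmem, hBT, hjump⟩ := hj
  have hchain := hser.2.2.1
  have hXT : X ≤ T := by
    rcases eq_or_ne X T with rfl | hne
    · exact le_rfl
    · rcases hchain hX hTmem hne with h | h
      · exact h
      · exact absurd (h hvT) hvX
  rcases eq_or_ne X B with rfl | hne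
  · exact le_rfl
  rcases hchain hX hBmem hne with h | h
  · exact h
  · rcases hjump X hX h hXT with rfl | rfl
    · exact le_rfl
    · exact absurd hvT hvX

lemma jump_ge_of_mem (𝓛 : Set (Submodule F V)) (hser : IsSeries 𝓛)
    {B T : Submodule F V} (hj : IsJump 𝓛 B T) {v : V} (hvT : v ∈ T) (hvB : v ∉ B)
    {X : Submodule F V} (hX : X ∈ 𝓛) (hvX : v ∈ X) : T ≤ X := by
  obtain ⟨hBmem, hTmem, hBT, hjump⟩ := hj
  have hchain := hser.2.2.1
  have hBX : B ≤ X := by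
    rcases eq_or_ne X B with rfl | hne
    · exact absurd hvX hvB
    rcases hchain hX hBmem hne with h | h
    · exact absurd (h hvX) hvB
    · exact h
  rcases eq_or_ne X T with rfl | hne
  · exact le_rfl
  rcases hchain hX hTmem hne with h | h
  · rcases hjump X hX hBX h with rfl | rfl
    · exact absurd hvX hvB
    · exact le_rfl
  · exact h

end Defs

/-- Key lemma: coefficients of basis vectors outside `U` vanish for any
combination lying in `U ∈ 𝓛`. -/
lemma key_lemma {F V : Type*} [Field F] [AddCommGroup V] [Module F V]
    (𝓛 : Set (Submodule F V)) (hser : IsSeries 𝓛) (ℬ : Set V)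
    (hadapt : ∀ B T : Submodule F V, IsJump 𝓛 B T →
      LinearIndependent F
        (fun x : ↥(ℬ ∩ ((T : Set V) \ (B : Set V))) => B.mkQ (x : V)) ∧
      Submodule.span F (B.mkQ '' (ℬ ∩ ((T : Set V) \ (B : Set V))))
        = T.map B.mkQ)
    (U : Submodule F V) (hU : U ∈ 𝓛)
    (s : Finset V) (hs : (s : Set V) ⊆ ℬ) (c : V → F)
    (hsum : (∑ v ∈ s, c v • v) ∈ U) :
    ∀ v ∈ s, v ∉ U → c v = 0 := by
  classical
  by_contra hcon
  push_neg at hcon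
  obtain ⟨v₀, hv₀s, hv₀U, hv₀c⟩ := hcon
  set bad : Finset V := s.filter (fun v => c v ≠ 0 ∧ v ∉ U) with hbad
  have hv₀bad : v₀ ∈ bad := by simp [hbad, hv₀s, hv₀U, hv₀c]
  have hbadne : bad.Nonempty := ⟨v₀, hv₀bad⟩
  -- choose jumps for elements of bad
  have hjumps : ∀ v ∈ bad, ∃ B T, IsJump 𝓛 B T ∧ v ∈ T ∧ v ∉ B := by
    intro v hv
    have hvU : v ∉ U := (Finset.mem_filter.mp hv).2.2
    have hvne : v ≠ 0 := fun h => hvU (h ▸ U.zero_mem)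
    exact exists_jump_aux 𝓛 hser v hvne
  choose! Bf Tf hjump hmemT hmemB using hjumps
  -- pick a maximal jump
  obtain ⟨v₁, hv₁, hmax⟩ := Set.Finite.exists_maximalFor Tf (↑bad : Set V)
    (bad.finite_toSet) ⟨v₀, hv₀bad⟩
  set B := Bf v₁ with hBdef
  set T := Tf v₁ with hTdef
  have hjB : IsJump 𝓛 B T := hjump v₁ hv₁
  have hchain := hser.2.2.1
  -- maximality: every jump top is ≤ T
  have hTmax : ∀ v ∈ bad, Tf v ≤ T := by
    intro v hv
    rcases eq_or_ne (Tf v) T with h | hne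
    · exact h.le
    rcases hchain (hjump v hv).2.1 hjB.2.1 hne with h | h
    · exact h
    · exact absurd (le_antisymm (hmax hv h) h) hne
  -- U ≤ B
  have hUB : U ≤ B := jump_le_of_not_mem 𝓛 hser hjB (hmemT v₁ hv₁) (hmemB v₁ hv₁)
    hU (Finset.mem_filter.mp hv₁).2.2
  -- every v ∈ s with c v ≠ 0 and v ∉ B lies in T \ B with jump (B, T)
  have hkey : ∀ v ∈ s, c v ≠ 0 → v ∉ B → v ∈ ℬ ∩ ((T : Set V) \ (B : Set V)) := by
    intro v hvs hvc hvB
    have hvU : v ∉ U := fun h => hvB (hUB h)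
    have hvbad : v ∈ bad := Finset.mem_filter.mpr ⟨hvs, hvc, hvU⟩
    have hjv := hjump v hvbad
    have hBv : B ≤ Bf v := jump_le_of_not_mem 𝓛 hser hjv (hmemT v hvbad)
      (hmemB v hvbad) hjB.1 hvB
    have hBvT : Bf v ≤ T := le_trans hjv.2.2.1.le (hTmax v hvbad)
    rcases hjB.2.2.2 (Bf v) hjv.1 hBv hBvT with hBeq | hBeq
    · -- Bf v = B, then Tf v = T
      have hTvT : Tf v ≤ T := hTmax v hvbad
      have hBTv : B ≤ Tf v := hBeq ▸ hjv.2.2.1.le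
      rcases hjB.2.2.2 (Tf v) hjv.2.1 hBTv hTvT with hTeq | hTeq
      · exfalso
        have hlt := hjv.2.2.1
        rw [hBeq, hTeq] at hlt
        exact lt_irrefl B hlt
      · refine ⟨hs hvs, hTeq ▸ hmemT v hvbad, fun h => (hmemB v hvbad) ?_⟩
        rwa [hBeq]
    · exfalso
      have hlt := hjv.2.2.1
      rw [hBeq] at hlt
      exact not_lt_of_ge (hTmax v hvbad) hlt
  -- the sum over elements not in B maps to 0 in V ⧸ B
  set t : Finset V := s.filter (fun v => c v ≠ 0 ∧ v ∉ B) with ht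
  have htsub : (t : Set V) ⊆ ℬ ∩ ((T : Set V) \ (B : Set V)) := by
    intro v hv
    rw [Finset.mem_coe, ht, Finset.mem_filter] at hv
    exact hkey v hv.1 hv.2.1 hv.2.2
  have hsumB : (∑ v ∈ t, c v • v) ∈ B := by
    have h1 : (∑ v ∈ s, c v • v) ∈ B := hUB hsum
    have h2 : (∑ v ∈ s \ t, c v • v) ∈ B := by
      apply Submodule.sum_mem
      intro v hv
      rw [Finset.mem_sdiff, ht, Finset.mem_filter] at hv
      by_cases hc : c v = 0
      · simp [hc]
      · have hvB : v ∈ B := by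
          by_contra hvB
          exact hv.2 ⟨hv.1, hc, hvB⟩
        exact Submodule.smul_mem _ _ hvB
    have h3 : (∑ v ∈ t, c v • v) = (∑ v ∈ s, c v • v) - (∑ v ∈ s \ t, c v • v) := by
      rw [eq_sub_iff_add_eq, add_comm]
      exact Finset.sum_sdiff (Finset.filter_subset _ _)
    rw [h3]
    exact Submodule.sub_mem B h1 h2
  -- contradiction with linear independence of ℬ ∩ (T \ B) mod B
  have hli := (hadapt B T hjB).1
  rw [linearIndependent_iff'] at hli
  -- build the Finset in the subtype
  have hv₁t : v₁ ∈ t := by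
    rw [ht, Finset.mem_filter]
    have h := Finset.mem_filter.mp hv₁
    exact ⟨h.1, h.2.1, hmemB v₁ hv₁⟩
  have hv₁c : c v₁ ≠ 0 := (Finset.mem_filter.mp hv₁).2.1
  set e : ↥t ↪ ↥(ℬ ∩ ((T : Set V) \ (B : Set V))) :=
    ⟨fun x => ⟨x.1, htsub x.2⟩, fun a b h => Subtype.ext (Subtype.mk_eq_mk.mp h)⟩ with he
  have hsum0 : (∑ i ∈ t.attach.map e, c (i : V) • B.mkQ (i : V)) = 0 := by
    have h4 : (∑ i ∈ t.attach.map e, c (i : V) • B.mkQ (i : V))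
        = ∑ v ∈ t, c v • B.mkQ v := by
      rw [Finset.sum_map]
      exact Finset.sum_attach t (fun v => c v • B.mkQ v)
    have h5 : (∑ v ∈ t, c v • B.mkQ v) = B.mkQ (∑ v ∈ t, c v • v) := by
      rw [map_sum]
      exact Finset.sum_congr rfl fun v _ => (map_smul _ _ _).symm
    rw [h4, h5, Submodule.mkQ_apply, Submodule.Quotient.mk_eq_zero]
    exact hsumB
  have := hli (t.attach.map e) (fun x => c (x : V)) hsum0
    ⟨v₁, htsub hv₁t⟩
    (Finset.mem_map.mpr ⟨⟨v₁, hv₁t⟩, Finset.mem_attach _ _, rfl⟩)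
  exact hv₁c this


/-- Let `𝓑` be an `𝓛`-adapted basis of `V`: for each jump
`(B, T)` of `𝓛`, the image of `𝓑 ∩ (T \ B)` in `V/B` is a basis of `T/B`
(identified with the image of `T` in `V/B`).  Then for any `U < W` in `𝓛`,
the image of `𝓑 ∩ (W \ U)` in `V/U` is a basis of `W/U`. -/
theorem stmt10 {F V : Type*} [Field F] [AddCommGroup V] [Module F V]
    (𝓛 : Set (Submodule F V)) (hser : IsSeries 𝓛)
    (ℬ : Set V)
    (hind : LinearIndependent F (fun v : ℬ => (v : V)))
    (hspan : Submodule.span F ℬ = ⊤)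
    (hadapt : ∀ B T : Submodule F V, IsJump 𝓛 B T →
      LinearIndependent F
        (fun x : ↥(ℬ ∩ ((T : Set V) \ (B : Set V))) => B.mkQ (x : V)) ∧
      Submodule.span F (B.mkQ '' (ℬ ∩ ((T : Set V) \ (B : Set V))))
        = T.map B.mkQ)
    (U W : Submodule F V) (hU : U ∈ 𝓛) (hW : W ∈ 𝓛) (hUW : U < W) :
    LinearIndependent F
      (fun x : ↥(ℬ ∩ ((W : Set V) \ (U : Set V))) => U.mkQ (x : V)) ∧
    Submodule.span F (U.mkQ '' (ℬ ∩ ((W : Set V) \ (U : Set V))))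
      = W.map U.mkQ := by
  classical
  constructor
  · have : (fun x : ↥(ℬ ∩ ((W : Set V) \ (U : Set V))) => U.mkQ (x : V))
        = (⇑U.mkQ ∘ (↑)) := rfl
    rw [this, linearIndependent_comp_subtype_iff, linearIndepOn_iff]
    intro l hl hl0
    rw [Finsupp.mem_supported] at hl
    rw [Finsupp.linearCombination_apply, Finsupp.sum] at hl0
    have hmem : (∑ v ∈ l.support, l v • v) ∈ U := by
      rw [← Submodule.Quotient.mk_eq_zero, ← Submodule.mkQ_apply, map_sum]
      calc (∑ v ∈ l.support, U.mkQ (l v • v))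
          = ∑ v ∈ l.support, l v • U.mkQ v :=
            Finset.sum_congr rfl fun v _ => map_smul _ _ _
        _ = 0 := hl0
    have hzero := key_lemma 𝓛 hser ℬ hadapt U hU l.support
      (fun v hv => (hl hv).1) l hmem
    ext v
    by_cases hv : v ∈ l.support
    · exact hzero v hv (hl hv).2.2
    · exact Finsupp.notMem_support_iff.mp hv
  · apply le_antisymm
    · rw [Submodule.span_le]
      rintro _ ⟨v, hv, rfl⟩
      exact Submodule.mem_map_of_mem hv.2.1
    · rintro x hx
      rw [Submodule.mem_map] at hx
      obtain ⟨w, hwW, rfl⟩ := hx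
      have hwspan : w ∈ Submodule.span F ℬ := by rw [hspan]; trivial
      obtain ⟨c, hcsupp, hcw⟩ := Submodule.mem_span_set.mp hwspan
      have hsupW : ∀ v ∈ c.support, v ∈ W := by
        intro v hv
        by_contra hvW
        exact Finsupp.mem_support_iff.mp hv
          (key_lemma 𝓛 hser ℬ hadapt W hW c.support hcsupp c
            (by rw [Finsupp.sum] at hcw; rw [hcw]; exact hwW) v hv hvW)
      have hw' : w = ∑ v ∈ c.support, c v • v := by
        rw [Finsupp.sum] at hcw; exact hcw.symm
      rw [hw', map_sum]
      apply Submodule.sum_mem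
      intro v hv
      rw [map_smul]
      by_cases hvU : v ∈ U
      · have h0 : U.mkQ v = 0 := by
          rw [Submodule.mkQ_apply, Submodule.Quotient.mk_eq_zero]; exact hvU
        rw [h0, smul_zero]
        exact Submodule.zero_mem _
      · exact Submodule.smul_mem _ _
          (Submodule.subset_span ⟨v, ⟨hcsupp hv, hsupW v hv, hvU⟩, rfl⟩)
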